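/- Let n = 2m, let t be a positive integer, let d = gcd(t, n), and let λ ∈ F_{2^n} be nonzero. Then the Gold function g(x) = Tr(λ x^{2^t+1}) is bent on F_{2^n} if and only if n/d is even and λ ∉ S, where S = { x^{2^t+1} : x ∈ F_{2^n} }. -/

import Mathlib

noncomputable section
attribute [local instance] Classical.propDecidable

noncomputable instance (n : ℕ) : Fintype (GaloisField 2 n) := Fintype.ofFinite _

/-- `(-1)^c` for `c ∈ F_2`. -/
def sgn (c : ZMod 2) : ℤ := if c = 0 then 1 else -1

/-- The absolute trace `Tr : F_{2^n} → F_2`. -/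
def Tr {n : ℕ} (x : GaloisField 2 n) : ZMod 2 :=
  Algebra.trace (ZMod 2) (GaloisField 2 n) x

/-- Walsh–Hadamard transform of a Boolean function on `F_{2^n}`. -/
def walsh {n : ℕ} (f : GaloisField 2 n → ZMod 2) (μ : GaloisField 2 n) : ℤ :=
  ∑ x : GaloisField 2 n, sgn (f x + Tr (μ * x))

/-- `f` is bent (where `n = 2m`): all Walsh coefficients are `±2^m`. -/
def IsBent {n : ℕ} (m : ℕ) (f : GaloisField 2 n → ZMod 2) : Prop :=
  ∀ μ, walsh f μ = 2 ^ m ∨ walsh f μ = -(2 ^ m)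

/-- `fs` is the dual of the bent function `f` (where `n = 2m`). -/
def IsDualOf {n : ℕ} (m : ℕ) (fs f : GaloisField 2 n → ZMod 2) : Prop :=
  ∀ μ, walsh f μ = 2 ^ m * sgn (fs μ)

/-! ### Auxiliary lemmas -/

lemma sgn_add (a b : ZMod 2) : sgn (a + b) = sgn a * sgn b := by revert a b; decide

lemma sgn_zero : sgn 0 = 1 := rfl

lemma sgn_flip (a : ZMod 2) : sgn (1 + a) = - sgn a := by revert a; decide

lemma sgn_mod (a : ZMod 2) : sgn a % 2 = 1 := by revert a; decide

lemma Tr_add {n : ℕ} (x y : GaloisField 2 n) : Tr (x + y) = Tr x + Tr y :=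
  map_add (Algebra.trace (ZMod 2) (GaloisField 2 n)) x y

lemma Tr_zero {n : ℕ} : Tr (0 : GaloisField 2 n) = 0 :=
  map_zero (Algebra.trace (ZMod 2) (GaloisField 2 n))

/-- iterated frobenius stability -/
lemma pow_pow_mul {M : Type*} [Monoid M] {x : M} {a : ℕ} (h : x ^ 2 ^ a = x) :
    ∀ k, x ^ 2 ^ (a * k) = x
  | 0 => by simp
  | k + 1 => by
      rw [Nat.mul_succ, pow_add, pow_mul, pow_pow_mul h k, h]

lemma pow_pow_gcd {M : Type*} [Monoid M] (x : M) :
    ∀ a b : ℕ, x ^ 2 ^ a = x → x ^ 2 ^ b = x → x ^ 2 ^ (Nat.gcd a b) = x := by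
  intro a b
  induction a, b using Nat.gcd.induction with
  | H0 n => intro _ h2; simpa using h2
  | H1 m n hm ih =>
    intro h1 h2
    rw [Nat.gcd_rec]
    refine ih ?_ h1
    have hk : x ^ 2 ^ (m * (n / m)) = x := pow_pow_mul h1 _
    calc x ^ 2 ^ (n % m) = (x ^ 2 ^ (m * (n / m))) ^ 2 ^ (n % m) := by rw [hk]
    _ = x ^ 2 ^ n := by rw [← pow_mul, ← pow_add, Nat.div_add_mod]
    _ = x := h2

/-- Frobenius as an algebra equivalence. -/
def frobAlg (n : ℕ) : GaloisField 2 n ≃ₐ[ZMod 2] GaloisField 2 n :=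
  AlgEquiv.ofRingEquiv (f := frobeniusEquiv (GaloisField 2 n) 2) (fun c => by
    exact RingHom.congr_fun (RingHom.ext_zmod
      (((frobeniusEquiv (GaloisField 2 n) 2 : GaloisField 2 n ≃+* GaloisField 2 n) :
          GaloisField 2 n →+* GaloisField 2 n).comp
        (algebraMap (ZMod 2) (GaloisField 2 n)))
      (algebraMap (ZMod 2) (GaloisField 2 n))) c)

lemma Tr_sq {n : ℕ} (x : GaloisField 2 n) : Tr (x ^ 2) = Tr x := by
  have := Algebra.trace_eq_of_algEquiv (frobAlg n) x
  rw [Tr, Tr, ← this]; rfl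

lemma Tr_pow_pow {n : ℕ} (j : ℕ) (x : GaloisField 2 n) : Tr (x ^ 2 ^ j) = Tr x := by
  induction j with
  | zero => simp
  | succ j ih => rw [pow_succ, pow_mul, Tr_sq, ih]

lemma GF_card {n : ℕ} (hn : n ≠ 0) : Fintype.card (GaloisField 2 n) = 2 ^ n := by
  rw [← Nat.card_eq_fintype_card, GaloisField.card 2 n hn]

lemma GF_pow_card {n : ℕ} (hn : n ≠ 0) (x : GaloisField 2 n) : x ^ 2 ^ n = x := by
  have := FiniteField.pow_card x
  rwa [GF_card hn] at this

lemma frob_inj {n j : ℕ} {z w : GaloisField 2 n} (h : z ^ 2 ^ j = w ^ 2 ^ j) : z = w := by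
  have h0 : (z + w) ^ 2 ^ j = 0 := by
    rw [add_pow_char_pow, h, ← add_pow_char_pow]
    simp [CharTwo.add_self_eq_zero]
  have := pow_eq_zero_iff (n := 2 ^ j) (pow_ne_zero j two_ne_zero) |>.mp h0
  have h2 := CharTwo.add_eq_iff_eq_add.mp this
  simpa using h2

/-- the charactersum over the field -/
lemma charsum {n : ℕ} (hn : n ≠ 0) (c : GaloisField 2 n) :
    (∑ x : GaloisField 2 n, sgn (Tr (c * x))) = if c = 0 then ((2 : ℤ) ^ n) else 0 := by
  split_ifs with h
  · subst h
    simp only [zero_mul, Tr_zero, sgn_zero]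
    rw [Finset.sum_const, Finset.card_univ, GF_card hn]
    simp
  · have hnd := traceForm_nondegenerate (ZMod 2) (GaloisField 2 n)
    have hb : ∃ b, Tr (c * b) ≠ 0 := by
      by_contra hf
      push_neg at hf
      exact h (hnd.1 c (fun y => by simpa [Algebra.traceForm_apply, Tr] using hf y))
    obtain ⟨b, hb⟩ := hb
    have hb1 : Tr (c * b) = 1 := by
      have := hb; revert this
      generalize Tr (c * b) = z
      revert z; decide
    have key : (∑ x : GaloisField 2 n, sgn (Tr (c * x)))
        = - ∑ x : GaloisField 2 n, sgn (Tr (c * x)) := by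
      calc (∑ x : GaloisField 2 n, sgn (Tr (c * x)))
          = ∑ x : GaloisField 2 n, sgn (Tr (c * (b + x))) :=
            (Fintype.sum_equiv (Equiv.addLeft b) _ _ (fun x => rfl)).symm
      _ = - ∑ x : GaloisField 2 n, sgn (Tr (c * x)) := by
            rw [← Finset.sum_neg_distrib]
            refine Finset.sum_congr rfl (fun x _ => ?_)
            rw [mul_add, Tr_add, hb1, sgn_flip]
    omega

/-- trace shift by frobenius -/
lemma Tr_shift {n t : ℕ} (hn : n ≠ 0) (c x : GaloisField 2 n) :
    Tr (c * x ^ 2 ^ t) = Tr (c ^ 2 ^ (n * t - t) * x) := by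
  have htle : t ≤ n * t := Nat.le_mul_of_pos_left t (Nat.pos_of_ne_zero hn)
  have hk : 2 ^ (n * t - t) * 2 ^ t = 2 ^ (n * t) := by
    rw [← pow_add]; congr 1; omega
  have hc : (c ^ 2 ^ (n * t - t) * x) ^ 2 ^ t = c * x ^ 2 ^ t := by
    rw [mul_pow, ← pow_mul, hk, pow_pow_mul (GF_pow_card hn c) t]
  rw [← hc, Tr_pow_pow]

/-- the exponent identity -/
lemma exponent_id {n t : ℕ} (hn : n ≠ 0) (ht : 0 < t) (lam μ x a : GaloisField 2 n) :
    (Tr (lam * x ^ (2 ^ t + 1)) + Tr (μ * x)) +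
      (Tr (lam * (x + a) ^ (2 ^ t + 1)) + Tr (μ * (x + a))) =
    (Tr (lam * a ^ (2 ^ t + 1)) + Tr (μ * a)) +
      Tr ((lam ^ 2 ^ (n * t - t) * a ^ 2 ^ (n * t - t) + lam * a ^ 2 ^ t) * x) := by
  have hxa : lam * (x + a) ^ (2 ^ t + 1)
      = lam * x ^ (2 ^ t + 1) + ((lam * a) * x ^ 2 ^ t + (lam * a ^ 2 ^ t) * x
          + lam * a ^ (2 ^ t + 1)) := by
    have hfr : (x + a) ^ (2:ℕ) ^ t = x ^ (2:ℕ) ^ t + a ^ (2:ℕ) ^ t :=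
      add_pow_char_pow ..
    calc lam * (x + a) ^ (2 ^ t + 1) = lam * ((x + a) ^ 2 ^ t * (x + a)) := by
          rw [pow_succ]
    _ = lam * ((x ^ 2 ^ t + a ^ 2 ^ t) * (x + a)) := by rw [hfr]
    _ = _ := by ring
  have h5 : Tr ((lam * a) * x ^ 2 ^ t) = Tr (lam ^ 2 ^ (n * t - t) * a ^ 2 ^ (n * t - t) * x) := by
    rw [Tr_shift hn (lam * a) x, mul_pow]
  rw [hxa, mul_add μ x a, add_mul, Tr_add, Tr_add, Tr_add, Tr_add, Tr_add, h5]
  have hh : ∀ z : ZMod 2, z + z = 0 := fun z => CharTwo.add_self_eq_zero z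
  linear_combination (hh (Tr (lam * x ^ (2 ^ t + 1)))) + (hh (Tr (μ * x)))

/-- walsh squared formula -/
lemma walsh_sq {n t : ℕ} (hn : n ≠ 0) (ht : 0 < t) (lam : GaloisField 2 n)
    (μ : GaloisField 2 n) :
    walsh (fun x => Tr (lam * x ^ (2 ^ t + 1))) μ *
      walsh (fun x => Tr (lam * x ^ (2 ^ t + 1))) μ =
    2 ^ n * ∑ a ∈ Finset.univ.filter
        (fun a : GaloisField 2 n =>
          lam ^ 2 ^ (n * t - t) * a ^ 2 ^ (n * t - t) + lam * a ^ 2 ^ t = 0),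
      sgn (Tr (lam * a ^ (2 ^ t + 1)) + Tr (μ * a)) := by
  calc walsh (fun x => Tr (lam * x ^ (2 ^ t + 1))) μ *
      walsh (fun x => Tr (lam * x ^ (2 ^ t + 1))) μ
      = ∑ x : GaloisField 2 n, ∑ y : GaloisField 2 n,
          sgn (Tr (lam * x ^ (2 ^ t + 1)) + Tr (μ * x)) *
            sgn (Tr (lam * y ^ (2 ^ t + 1)) + Tr (μ * y)) := by
        unfold walsh; rw [Finset.sum_mul_sum]
  _ = ∑ x : GaloisField 2 n, ∑ a : GaloisField 2 n,
          sgn (Tr (lam * x ^ (2 ^ t + 1)) + Tr (μ * x)) *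
            sgn (Tr (lam * (x + a) ^ (2 ^ t + 1)) + Tr (μ * (x + a))) := by
        refine Finset.sum_congr rfl (fun x _ => ?_)
        exact (Fintype.sum_equiv (Equiv.addLeft x) _ _ (fun a => rfl)).symm
  _ = ∑ a : GaloisField 2 n, ∑ x : GaloisField 2 n,
          sgn (Tr (lam * a ^ (2 ^ t + 1)) + Tr (μ * a)) *
            sgn (Tr ((lam ^ 2 ^ (n * t - t) * a ^ 2 ^ (n * t - t) + lam * a ^ 2 ^ t) * x)) := by
        rw [Finset.sum_comm]
        refine Finset.sum_congr rfl (fun a _ => Finset.sum_congr rfl (fun x _ => ?_))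
        rw [← sgn_add, ← sgn_add, exponent_id hn ht lam μ x a]
  _ = ∑ a : GaloisField 2 n, sgn (Tr (lam * a ^ (2 ^ t + 1)) + Tr (μ * a)) *
          (if lam ^ 2 ^ (n * t - t) * a ^ 2 ^ (n * t - t) + lam * a ^ 2 ^ t = 0
            then ((2 : ℤ) ^ n) else 0) := by
        refine Finset.sum_congr rfl (fun a _ => ?_)
        rw [← Finset.mul_sum, charsum hn]
  _ = ∑ a ∈ Finset.univ.filter
        (fun a : GaloisField 2 n =>
          lam ^ 2 ^ (n * t - t) * a ^ 2 ^ (n * t - t) + lam * a ^ 2 ^ t = 0),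
          ((2 : ℤ) ^ n) * sgn (Tr (lam * a ^ (2 ^ t + 1)) + Tr (μ * a)) := by
        rw [Finset.sum_filter]
        refine Finset.sum_congr rfl (fun a _ => ?_)
        split_ifs <;> ring
  _ = _ := by rw [Finset.mul_sum]

lemma coprime_aux {t d : ℕ} (hd : d ∣ t) (hd0 : 0 < d) :
    Nat.Coprime (2 ^ t + 1) (2 ^ d - 1) := by
  have h1 : (2 ^ d - 1 : ℕ) ∣ 2 ^ t - 1 := by
    obtain ⟨c, rfl⟩ := hd
    have := Nat.sub_dvd_pow_sub_pow (2 ^ d) 1 c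
    simpa [← pow_mul] using this
  set g := Nat.gcd (2 ^ t + 1) (2 ^ d - 1) with hg
  have hga : g ∣ 2 ^ t + 1 := Nat.gcd_dvd_left _ _
  have hgb : g ∣ 2 ^ d - 1 := Nat.gcd_dvd_right _ _
  have hgc : g ∣ 2 ^ t - 1 := hgb.trans h1
  have h2 : g ∣ 2 := by
    have := Nat.dvd_sub hga hgc
    have ht1 : (1:ℕ) ≤ 2 ^ t := Nat.one_le_two_pow
    have : g ∣ (2 ^ t + 1) - (2 ^ t - 1) := this
    have he : (2 ^ t + 1) - (2 ^ t - 1) = 2 := by omega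
    rwa [he] at this
  have hodd : ¬ (2 ∣ 2 ^ d - 1) := by
    have h2d : (2:ℕ) ∣ 2 ^ d := dvd_pow_self 2 hd0.ne'
    have h2d' : (1:ℕ) < 2 ^ d := Nat.one_lt_two_pow_iff.mpr hd0.ne'
    omega
  rcases (Nat.dvd_prime Nat.prime_two).mp h2 with h | h
  · exact h
  · exact absurd (h ▸ hgb) hodd

lemma gcd_two_mul {t n : ℕ} (ht : 0 < t) (hodd : ¬ Even (n / Nat.gcd t n)) :
    Nat.gcd (2 * t) n = Nat.gcd t n := by
  set d := Nat.gcd t n with hd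
  set e := Nat.gcd (2 * t) n with he
  have hd0 : 0 < d := Nat.gcd_pos_of_pos_left n ht
  have hde : d ∣ e := Nat.dvd_gcd ((Nat.gcd_dvd_left t n).mul_left 2) (Nat.gcd_dvd_right t n)
  have he2d : e ∣ 2 * d := by
    have h2 : Nat.gcd (2 * t) (2 * n) = 2 * d := by rw [Nat.gcd_mul_left]
    exact h2 ▸ Nat.dvd_gcd (Nat.gcd_dvd_left _ _) ((Nat.gcd_dvd_right (2*t) n).mul_left 2)
  obtain ⟨c, hc⟩ := hde
  have hc2 : c ∣ 2 := by
    have : d * c ∣ d * 2 := by rw [← hc]; rwa [mul_comm 2 d] at he2d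
    exact (mul_dvd_mul_iff_left hd0.ne').mp this
  rcases (Nat.dvd_prime Nat.prime_two).mp hc2 with h | h
  · rw [h, mul_one] at hc; omega
  · exfalso
    apply hodd
    rw [h] at hc
    have h2dn : d * 2 ∣ n := hc ▸ Nat.gcd_dvd_right (2 * t) n
    obtain ⟨k, hk⟩ := h2dn
    have hnd : n / d = 2 * k := by
      rw [hk, mul_assoc]
      exact Nat.mul_div_cancel_left _ hd0
    rw [hnd]; exact even_two_mul k

lemma surj_of_odd {n t : ℕ} (hn : n ≠ 0) (ht : 0 < t) (hodd : ¬ Even (n / Nat.gcd t n))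
    (lam : GaloisField 2 n) :
    lam ∈ Set.range (fun x : GaloisField 2 n => x ^ (2 ^ t + 1)) := by
  have hinj : Function.Injective (fun x : GaloisField 2 n => x ^ (2 ^ t + 1)) := by
    intro x y hxy
    simp only at hxy
    by_cases hy : y = 0
    · subst hy
      rw [zero_pow (Nat.succ_ne_zero _)] at hxy
      exact pow_eq_zero_iff (Nat.succ_ne_zero _) |>.mp hxy
    by_cases hx : x = 0
    · subst hx
      rw [zero_pow (Nat.succ_ne_zero _)] at hxy
      exact absurd (pow_eq_zero_iff (Nat.succ_ne_zero _) |>.mp hxy.symm) hy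
    set z := x * y⁻¹ with hz_def
    have hz0 : z ≠ 0 := mul_ne_zero hx (inv_ne_zero hy)
    have hz1 : z ^ (2 ^ t + 1) = 1 := by
      rw [hz_def, mul_pow, inv_pow, hxy, mul_inv_cancel₀ (pow_ne_zero _ hy)]
    have hzt : z ^ (2:ℕ) ^ t = z⁻¹ := by
      apply eq_inv_of_mul_eq_one_left
      rw [← pow_succ]
      exact hz1
    have hz2t : z ^ (2:ℕ) ^ (2 * t) = z := by
      have h2t : (2:ℕ) ^ (2 * t) = 2 ^ t * 2 ^ t := by rw [two_mul, pow_add]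
      rw [h2t, pow_mul, hzt, inv_pow, hzt, inv_inv]
    have hzn : z ^ (2:ℕ) ^ n = z := GF_pow_card hn z
    have hzd : z ^ (2:ℕ) ^ (Nat.gcd t n) = z := by
      have := pow_pow_gcd z (2 * t) n hz2t hzn
      rwa [gcd_two_mul ht hodd] at this
    have hztz : z ^ (2:ℕ) ^ t = z := by
      obtain ⟨c, hc⟩ := Nat.gcd_dvd_left t n
      have := pow_pow_mul hzd c
      rwa [← hc] at this
    have hzi : z⁻¹ = z := by rw [← hzt, hztz]
    have hzz : z * z = 1 := by
      have hzz' : z * z = z * z⁻¹ := by rw [hzi]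
      rw [hzz', mul_inv_cancel₀ hz0]
    have hz_one : z = 1 := by
      have hsq : (z + 1) ^ 2 = 0 := by
        rw [CharTwo.add_sq, one_pow, sq, hzz, CharTwo.add_self_eq_zero]
      have := pow_eq_zero_iff (two_ne_zero) |>.mp hsq
      have h2 := CharTwo.add_eq_iff_eq_add.mp this
      simpa using h2
    have : x * y⁻¹ = 1 := hz_one
    exact (mul_inv_eq_one₀ hy).mp this
  have hsurj := (Finite.injective_iff_surjective).mp hinj
  exact hsurj lam

lemma kernel_iff {n t : ℕ} (hn : n ≠ 0) (ht : 0 < t) (lam : GaloisField 2 n)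
    (hlam : lam ≠ 0) :
    (∃ a : GaloisField 2 n, a ≠ 0 ∧
        lam ^ 2 ^ (n * t - t) * a ^ 2 ^ (n * t - t) + lam * a ^ 2 ^ t = 0) ↔
      lam ∈ Set.range (fun x : GaloisField 2 n => x ^ (2 ^ t + 1)) := by
  have htle : t ≤ n * t := Nat.le_mul_of_pos_left t (Nat.pos_of_ne_zero hn)
  have hk2 : (2:ℕ) ^ (n * t - t) * 2 ^ t = 2 ^ (n * t) := by rw [← pow_add]; congr 1; omega
  have hpp : (2:ℕ) ^ t * 2 ^ t = 2 ^ (2 * t) := by rw [← pow_add, two_mul]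
  have hd0 : 0 < Nat.gcd t n := Nat.gcd_pos_of_pos_left n ht
  have hexp : (2 ^ t + 1) * (2:ℕ) ^ t = 2 ^ (2 * t) + 2 ^ t := by
    rw [add_mul, one_mul, hpp]
  constructor
  · rintro ⟨a, ha0, hLa⟩
    have h1 : lam ^ 2 ^ (n * t - t) * a ^ 2 ^ (n * t - t) = lam * a ^ 2 ^ t := by
      have := CharTwo.add_eq_iff_eq_add.mp hLa
      simpa using this
    have h2 : lam * a = lam ^ (2:ℕ) ^ t * a ^ (2:ℕ) ^ (2 * t) := by
      have hcong := congrArg (fun z : GaloisField 2 n => z ^ (2:ℕ) ^ t) h1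
      simp only [mul_pow, ← pow_mul] at hcong
      rw [hk2, hpp] at hcong
      rwa [pow_pow_mul (GF_pow_card hn lam) t, pow_pow_mul (GF_pow_card hn a) t] at hcong
    set u := lam * a ^ (2 ^ t + 1) with hu_def
    have hu0 : u ≠ 0 := mul_ne_zero hlam (pow_ne_zero _ ha0)
    have hu : u ^ (2:ℕ) ^ t = u := by
      calc u ^ (2:ℕ) ^ t = lam ^ (2:ℕ) ^ t * a ^ ((2 ^ t + 1) * 2 ^ t) := by
            rw [hu_def, mul_pow, ← pow_mul]
      _ = lam ^ (2:ℕ) ^ t * (a ^ (2:ℕ) ^ (2 * t) * a ^ (2:ℕ) ^ t) := by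
            rw [hexp, pow_add]
      _ = (lam ^ (2:ℕ) ^ t * a ^ (2:ℕ) ^ (2 * t)) * a ^ (2:ℕ) ^ t := by ring
      _ = (lam * a) * a ^ (2:ℕ) ^ t := by rw [← h2]
      _ = u := by rw [hu_def, pow_succ]; ring
    have hun : u ^ (2:ℕ) ^ n = u := GF_pow_card hn u
    have hud : u ^ (2:ℕ) ^ (Nat.gcd t n) = u := pow_pow_gcd u t n hu hun
    have hd1 : (1:ℕ) ≤ 2 ^ Nat.gcd t n := Nat.one_le_two_pow
    have hu1 : u ^ (2 ^ Nat.gcd t n - 1) = 1 := by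
      have hmul : u ^ (2 ^ Nat.gcd t n - 1) * u = 1 * u := by
        rw [← pow_succ, one_mul]
        have he : 2 ^ Nat.gcd t n - 1 + 1 = 2 ^ Nat.gcd t n := by omega
        rw [he, hud]
      exact mul_right_cancel₀ hu0 hmul
    have hord : orderOf u ∣ 2 ^ Nat.gcd t n - 1 := orderOf_dvd_of_pow_eq_one hu1
    have hcop : Nat.Coprime (2 ^ t + 1) (orderOf u) :=
      Nat.Coprime.coprime_dvd_right hord (coprime_aux (Nat.gcd_dvd_left t n) hd0)
    obtain ⟨w, hw⟩ : ∃ w : GaloisField 2 n, w ^ (2 ^ t + 1) = u := by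
      rcases eq_or_ne (orderOf u) 1 with h1' | h1'
      · exact ⟨1, by rw [one_pow, ← orderOf_eq_one_iff.mp h1']⟩
      · have hpos : 0 < orderOf u := Nat.pos_of_dvd_of_pos hord (by
          have : (1:ℕ) < 2 ^ Nat.gcd t n := Nat.one_lt_two_pow_iff.mpr hd0.ne'
          omega)
        obtain ⟨e, -, he⟩ := Nat.exists_mul_mod_eq_one_of_coprime hcop (by omega)
        refine ⟨u ^ e, ?_⟩
        rw [← pow_mul]
        have hdm := Nat.div_add_mod ((2 ^ t + 1) * e) (orderOf u)
        calc u ^ (e * (2 ^ t + 1)) = u ^ ((2 ^ t + 1) * e) := by rw [mul_comm]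
        _ = u ^ (orderOf u * ((2 ^ t + 1) * e / orderOf u) + (2 ^ t + 1) * e % orderOf u) := by
              rw [hdm]
        _ = (u ^ orderOf u) ^ ((2 ^ t + 1) * e / orderOf u) * u ^ ((2 ^ t + 1) * e % orderOf u) := by
              rw [pow_add, pow_mul]
        _ = u := by rw [pow_orderOf_eq_one, one_pow, he, pow_one, one_mul]
    refine ⟨w * a⁻¹, ?_⟩
    show (w * a⁻¹) ^ (2 ^ t + 1) = lam
    rw [mul_pow, hw, hu_def, inv_pow, mul_assoc, mul_inv_cancel₀ (pow_ne_zero _ ha0), mul_one]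
  · rintro ⟨b, hb⟩
    simp only at hb
    have hb0 : b ≠ 0 := by
      rintro rfl
      rw [zero_pow (Nat.succ_ne_zero _)] at hb
      exact hlam hb.symm
    refine ⟨b⁻¹, inv_ne_zero hb0, ?_⟩
    have key : lam ^ 2 ^ (n * t - t) * (b⁻¹) ^ 2 ^ (n * t - t) = lam * (b⁻¹) ^ 2 ^ t := by
      apply frob_inj (j := t)
      have hL' : (lam ^ 2 ^ (n * t - t) * (b⁻¹) ^ 2 ^ (n * t - t)) ^ (2:ℕ) ^ t = lam * b⁻¹ := by
        rw [mul_pow, ← pow_mul, ← pow_mul, hk2, pow_pow_mul (GF_pow_card hn lam) t,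
          pow_pow_mul (GF_pow_card hn b⁻¹) t]
      have hR' : (lam * (b⁻¹) ^ 2 ^ t) ^ (2:ℕ) ^ t = lam ^ (2:ℕ) ^ t * (b⁻¹) ^ (2:ℕ) ^ (2 * t) := by
        rw [mul_pow, ← pow_mul, hpp]
      rw [hL', hR']
      rw [← hb, ← pow_mul, hexp, inv_pow]
      rw [pow_add, pow_succ]
      field_simp
      ring
    rw [key, CharTwo.add_self_eq_zero]

/-- Gold function bentness: `g(x) = Tr(λ x^{2^t+1})` is bent iff `n / gcd(t,n)` is even and
`λ ∉ S = {x^{2^t+1} : x ∈ F_{2^n}}`. -/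
theorem statement11 {n m : ℕ} (hn : n = 2 * m) (t : ℕ) (ht : 0 < t)
    (lam : GaloisField 2 n) (hlam : lam ≠ 0) :
    IsBent m (fun x => Tr (lam * x ^ (2 ^ t + 1))) ↔
      Even (n / Nat.gcd t n) ∧
        lam ∉ Set.range (fun x : GaloisField 2 n => x ^ (2 ^ t + 1)) := by
  have sgn_pair : ∀ z : ZMod 2, sgn z + sgn (z + 1) = 0 := by decide
  have sgn_one : ∀ z : ZMod 2, z ≠ 0 → z = 1 := by decide
  rcases Nat.eq_zero_or_pos m with hm0 | hm0
  · -- degenerate case `n = 0`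
    subst hm0
    have hn0 : n = 0 := by omega
    subst hn0
    have hpoly : (Polynomial.X ^ 2 ^ 0 - Polynomial.X : Polynomial (ZMod 2)) = 0 := by
      rw [pow_zero, pow_one, sub_self]
    have inst : Polynomial.IsSplittingField (ZMod 2) (ZMod 2)
        (Polynomial.X ^ 2 ^ 0 - Polynomial.X) := by
      constructor
      · rw [hpoly, Polynomial.map_zero]; exact Polynomial.Splits.zero
      · rw [hpoly, Polynomial.rootSet_zero, Algebra.adjoin_empty]
        ext x
        simp only [Algebra.mem_bot, Algebra.mem_top, iff_true]
        exact ⟨x, by simp⟩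
    let e : GaloisField 2 0 ≃ₐ[ZMod 2] ZMod 2 :=
      (@Polynomial.IsSplittingField.algEquiv _ (ZMod 2) _ _ _
        (Polynomial.X ^ 2 ^ 0 - Polynomial.X : Polynomial (ZMod 2)) inst).symm
    have hcard : Fintype.card (GaloisField 2 0) = 2 := by
      rw [Fintype.card_congr e.toEquiv, ZMod.card]
    constructor
    · intro hB
      exfalso
      have h1 := hB 0
      have hmod : walsh (fun x : GaloisField 2 0 => Tr (lam * x ^ (2 ^ t + 1))) 0 % 2 = 0 := by
        unfold walsh
        rw [Finset.sum_int_mod]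
        have hc : ∀ x ∈ (Finset.univ : Finset (GaloisField 2 0)),
            sgn (Tr (lam * x ^ (2 ^ t + 1)) + Tr (0 * x)) % 2 = 1 := fun x _ => sgn_mod _
        rw [Finset.sum_congr rfl hc, Finset.sum_const, Finset.card_univ, hcard]
        norm_num
      rcases h1 with h | h <;> rw [h] at hmod <;> norm_num at hmod
    · rintro ⟨_, hr⟩
      exfalso
      apply hr
      have hlam1 : lam = 1 := by
        have h1 : e lam ≠ 0 := fun h0 => hlam (by
          have := congrArg e.symm h0
          simpa using this)
        have h2 := congrArg e.symm (sgn_one _ h1)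
        simpa using h2
      exact ⟨1, by simp [hlam1]⟩
  · -- main case
    have hn0 : n ≠ 0 := by omega
    have hzero : lam ^ 2 ^ (n * t - t) * (0:GaloisField 2 n) ^ 2 ^ (n * t - t)
        + lam * (0:GaloisField 2 n) ^ 2 ^ t = 0 := by
      rw [zero_pow (pow_ne_zero _ two_ne_zero), zero_pow (pow_ne_zero _ two_ne_zero),
        mul_zero, mul_zero, add_zero]
    have hadd : ∀ a : GaloisField 2 n,
        lam ^ 2 ^ (n * t - t) * a ^ 2 ^ (n * t - t) + lam * a ^ 2 ^ t = 0 →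
        ∀ x, Tr (lam * (x + a) ^ (2 ^ t + 1))
          = Tr (lam * x ^ (2 ^ t + 1)) + Tr (lam * a ^ (2 ^ t + 1)) := by
      intro a hLa x
      have hE := exponent_id hn0 ht lam 0 x a
      rw [hLa] at hE
      simp only [zero_mul, Tr_zero, add_zero, zero_add] at hE
      have hh : ∀ z : ZMod 2, z + z = 0 := fun z => CharTwo.add_self_eq_zero z
      linear_combination hE - hh (Tr (lam * x ^ (2 ^ t + 1)))
    constructor
    · intro hB
      have hK : ¬ (∃ a : GaloisField 2 n, a ≠ 0 ∧
          lam ^ 2 ^ (n * t - t) * a ^ 2 ^ (n * t - t) + lam * a ^ 2 ^ t = 0) := by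
        rintro ⟨a0, ha0, hL0⟩
        have hsq := walsh_sq hn0 ht lam 0
        set K := Finset.univ.filter (fun a : GaloisField 2 n =>
          lam ^ 2 ^ (n * t - t) * a ^ 2 ^ (n * t - t) + lam * a ^ 2 ^ t = 0) with hK_def
        have h0K : (0:GaloisField 2 n) ∈ K := by
          rw [hK_def, Finset.mem_filter]; exact ⟨Finset.mem_univ _, hzero⟩
        have ha0K : a0 ∈ K := by
          rw [hK_def, Finset.mem_filter]; exact ⟨Finset.mem_univ _, hL0⟩
        have hsq' : walsh (fun x => Tr (lam * x ^ (2 ^ t + 1))) 0 *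
            walsh (fun x => Tr (lam * x ^ (2 ^ t + 1))) 0
            = 2 ^ n * ∑ a ∈ K, sgn (Tr (lam * a ^ (2 ^ t + 1))) := by
          rw [hsq]; congr 1
          refine Finset.sum_congr rfl (fun a _ => ?_)
          rw [zero_mul, Tr_zero, add_zero]
        have hW2 : walsh (fun x => Tr (lam * x ^ (2 ^ t + 1))) 0 *
            walsh (fun x => Tr (lam * x ^ (2 ^ t + 1))) 0 = (2:ℤ) ^ n := by
          rcases hB 0 with h | h
          · rw [h, ← pow_add]; congr 1; omega
          · rw [h, neg_mul_neg, ← pow_add]; congr 1; omega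
        have hS1 : (∑ a ∈ K, sgn (Tr (lam * a ^ (2 ^ t + 1)))) = 1 := by
          have := hsq'.symm.trans hW2
          have h2n : ((2:ℤ) ^ n) ≠ 0 := pow_ne_zero _ two_ne_zero
          field_simp at this
          exact mul_left_cancel₀ h2n (by rw [this, mul_one])
        by_cases hall : ∀ a ∈ K, Tr (lam * a ^ (2 ^ t + 1)) = 0
        · have hSc : (∑ a ∈ K, sgn (Tr (lam * a ^ (2 ^ t + 1)))) = (K.card : ℤ) := by
            rw [Finset.sum_congr rfl (fun a ha => by rw [hall a ha, sgn_zero])]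
            simp
          have hcard2 : 2 ≤ K.card := by
            have hsub : ({0, a0} : Finset (GaloisField 2 n)) ⊆ K := by
              intro x hx
              rcases Finset.mem_insert.mp hx with rfl | hx
              · exact h0K
              · rw [Finset.mem_singleton.mp hx]; exact ha0K
            have := Finset.card_le_card hsub
            rwa [Finset.card_pair (Ne.symm ha0)] at this
          rw [hSc] at hS1
          have : K.card = 1 := by exact_mod_cast hS1
          omega
        · push_neg at hall
          obtain ⟨b, hbK, hbne⟩ := hall
          have hLb : lam ^ 2 ^ (n * t - t) * b ^ 2 ^ (n * t - t) + lam * b ^ 2 ^ t = 0 := by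
            have h' := hbK
            rw [hK_def] at h'
            exact (Finset.mem_filter.mp h').2
          have hb1 : Tr (lam * b ^ (2 ^ t + 1)) = 1 := sgn_one _ hbne
          have hb0 : b ≠ 0 := by
            rintro rfl
            apply hbne
            rw [zero_pow (Nat.succ_ne_zero _), mul_zero, Tr_zero]
          have hS0 : (∑ a ∈ K, sgn (Tr (lam * a ^ (2 ^ t + 1)))) = 0 := by
            refine Finset.sum_involution (fun a _ => a + b) ?_ ?_ ?_ ?_
            · intro a ha
              rw [hadd b hLb a, hb1, sgn_pair]
            · intro a ha _
              intro hcon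
              exact hb0 (by simpa using hcon)
            · intro a ha
              show a + b ∈ K
              rw [hK_def, Finset.mem_filter]
              refine ⟨Finset.mem_univ _, ?_⟩
              have haK : lam ^ 2 ^ (n * t - t) * a ^ 2 ^ (n * t - t) + lam * a ^ 2 ^ t = 0 := by
                have h' := ha
                rw [hK_def] at h'
                exact (Finset.mem_filter.mp h').2
              have hexp : (a + b) ^ (2:ℕ) ^ (n * t - t)
                  = a ^ (2:ℕ) ^ (n * t - t) + b ^ (2:ℕ) ^ (n * t - t) := add_pow_char_pow ..
              have hexp2 : (a + b) ^ (2:ℕ) ^ t = a ^ (2:ℕ) ^ t + b ^ (2:ℕ) ^ t :=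
                add_pow_char_pow ..
              rw [hexp, hexp2]
              have : lam ^ 2 ^ (n * t - t) * (a ^ 2 ^ (n * t - t) + b ^ 2 ^ (n * t - t))
                  + lam * (a ^ 2 ^ t + b ^ 2 ^ t)
                  = (lam ^ 2 ^ (n * t - t) * a ^ 2 ^ (n * t - t) + lam * a ^ 2 ^ t)
                    + (lam ^ 2 ^ (n * t - t) * b ^ 2 ^ (n * t - t) + lam * b ^ 2 ^ t) := by ring
              rw [this, haK, hLb, add_zero]
            · intro a ha
              show a + b + b = a
              rw [add_assoc, CharTwo.add_self_eq_zero, add_zero]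
          rw [hS0] at hS1
          norm_num at hS1
      have hR : lam ∉ Set.range (fun x : GaloisField 2 n => x ^ (2 ^ t + 1)) :=
        fun h => hK ((kernel_iff hn0 ht lam hlam).mpr h)
      refine ⟨?_, hR⟩
      by_contra hodd
      exact hR (surj_of_odd hn0 ht hodd lam)
    · rintro ⟨hq, hr⟩
      have hK : ¬ (∃ a : GaloisField 2 n, a ≠ 0 ∧
          lam ^ 2 ^ (n * t - t) * a ^ 2 ^ (n * t - t) + lam * a ^ 2 ^ t = 0) :=
        fun h => hr ((kernel_iff hn0 ht lam hlam).mp h)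
      intro μ
      have hfilter : Finset.univ.filter (fun a : GaloisField 2 n =>
          lam ^ 2 ^ (n * t - t) * a ^ 2 ^ (n * t - t) + lam * a ^ 2 ^ t = 0) = {0} := by
        ext a
        simp only [Finset.mem_filter, Finset.mem_univ, true_and, Finset.mem_singleton]
        constructor
        · intro h
          by_contra ha
          exact hK ⟨a, ha, h⟩
        · rintro rfl
          exact hzero
      have hw2 := walsh_sq hn0 ht lam μ
      rw [hfilter, Finset.sum_singleton] at hw2
      have hzt : Tr (lam * (0:GaloisField 2 n) ^ (2 ^ t + 1)) + Tr (μ * 0) = 0 := by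
        rw [zero_pow (Nat.succ_ne_zero _), mul_zero, mul_zero, Tr_zero, add_zero]
      rw [hzt, sgn_zero, mul_one] at hw2
      have h2n : ((2:ℤ)) ^ n = 2 ^ m * 2 ^ m := by rw [← pow_add, hn, two_mul]
      rw [h2n] at hw2
      exact mul_self_eq_mul_self_iff.mp hw2
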